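/- The convex hull of a set G in ℝ^N equals the set of all convex combinations of N+1 points of G (Carathéodory's theorem), and consequently if Graph(C) ⊆ E × E has closed graph with E compact, then the set-valued map x ↦ conv(closure(Graph(C))_x) also has closed graph. -/

import Mathlib

open Filter

/-- Carathéodory in the form we need: every element of the hull is a combination of
exactly `N+1` points of `G` (with repetitions allowed). -/
lemma carath_aux (N : ℕ) (G : Set (Fin N → ℝ)) :
    convexHull ℝ G =
      {y | ∃ (w : Fin (N + 1) → (Fin N → ℝ)) (α : Fin (N + 1) → ℝ),
        (∀ i, w i ∈ G) ∧ (∀ i, 0 ≤ α i) ∧ (∑ i, α i) = 1 ∧ y = ∑ i, α i • w i} := by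
  classical
  ext y
  constructor
  · intro hy
    obtain ⟨ι, hfin, z, w, hrange, hai, hpos, hsum, heq⟩ :=
      eq_pos_convex_span_of_mem_convexHull hy
    have hne : Nonempty ι := by
      by_contra h
      rw [not_nonempty_iff] at h
      simp [Finset.univ_eq_empty] at hsum
    obtain ⟨i₀⟩ := hne
    have hcard : Fintype.card ι ≤ N + 1 := by
      have h1 := hai.card_le_finrank_succ
      have h2 : Module.finrank ℝ (vectorSpan ℝ (Set.range z)) ≤ N := by
        have := Submodule.finrank_le (vectorSpan ℝ (Set.range z))
        simpa [Module.finrank_fin_fun] using this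
      omega
    obtain ⟨e⟩ : Nonempty (ι ↪ Fin (N + 1)) := by
      apply Function.Embedding.nonempty_of_card_le
      simpa using hcard
    set W : Fin (N + 1) → (Fin N → ℝ) := Function.extend e z (fun _ => z i₀) with hW
    set A : Fin (N + 1) → ℝ := Function.extend e w 0 with hA
    have hext : ∀ (M : Type) [AddCommMonoid M] (f : ι → M),
        ∑ j, Function.extend e f 0 j = ∑ i, f i := by
      intro M _ f
      rw [← Finset.sum_subset (Finset.subset_univ (Finset.univ.image e))]
      · rw [Finset.sum_image (fun a _ b _ h => e.injective h)]
        exact Finset.sum_congr rfl fun i _ => e.injective.extend_apply f 0 i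
      · intro j _ hj
        rw [Function.extend_def, dif_neg]
        · rfl
        · rintro ⟨i, rfl⟩
          exact hj (Finset.mem_image_of_mem e (Finset.mem_univ i))
    refine ⟨W, A, ?_, ?_, ?_, ?_⟩
    · intro i
      rw [hW, Function.extend_def]
      split
      · next h => exact hrange (Set.mem_range_self _)
      · exact hrange (Set.mem_range_self i₀)
    · intro i
      rw [hA, Function.extend_def]
      split
      · next h => exact (hpos _).le
      · exact le_refl 0
    · rw [hA, hext ℝ w]; exact hsum
    · rw [← heq, ← hext (Fin N → ℝ) (fun i => w i • z i)]
      apply Finset.sum_congr rfl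
      intro j _
      rw [hW, hA, Function.extend_def, Function.extend_def, Function.extend_def]
      split
      · rfl
      · simp
  · rintro ⟨w, α, hwG, hα0, hαsum, rfl⟩
    rw [← Finset.centerMass_eq_of_sum_1 _ _ hαsum]
    exact Finset.centerMass_mem_convexHull _ (fun i _ => hα0 i) (by rw [hαsum]; norm_num)
      (fun i _ => hwG i)

theorem caratheodory_and_closed_graph (N : ℕ)
    (E : Set (Fin N → ℝ)) (hE : IsCompact E)
    (C : (Fin N → ℝ) → Set (Fin N → ℝ))
    (hGraph : {p : (Fin N → ℝ) × (Fin N → ℝ) | p.2 ∈ C p.1} ⊆ E ×ˢ E)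
    (D : (Fin N → ℝ) → Set (Fin N → ℝ))
    (hD : ∀ x, D x = convexHull ℝ
      {y | (x, y) ∈ closure {p : (Fin N → ℝ) × (Fin N → ℝ) | p.2 ∈ C p.1}}) :
    (∀ G : Set (Fin N → ℝ), convexHull ℝ G =
      {y | ∃ (w : Fin (N + 1) → (Fin N → ℝ)) (α : Fin (N + 1) → ℝ),
        (∀ i, w i ∈ G) ∧ (∀ i, 0 ≤ α i) ∧ (∑ i, α i) = 1 ∧ y = ∑ i, α i • w i}) ∧
    (∀ (x y : ℕ → Fin N → ℝ) (x₀ y₀ : Fin N → ℝ),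
      Filter.Tendsto x Filter.atTop (nhds x₀) →
      Filter.Tendsto y Filter.atTop (nhds y₀) →
      (∀ n, y n ∈ D (x n)) → y₀ ∈ D x₀) := by
  refine ⟨carath_aux N, ?_⟩
  intro x y x₀ y₀ hx hy hmem
  set S : Set ((Fin N → ℝ) × (Fin N → ℝ)) :=
    closure {p : (Fin N → ℝ) × (Fin N → ℝ) | p.2 ∈ C p.1} with hS
  have hSE : S ⊆ E ×ˢ E := by
    rw [hS]
    exact closure_minimal hGraph ((hE.prod hE).isClosed)
  -- for each n pick a representation
  have hrep : ∀ n, ∃ (w : Fin (N + 1) → (Fin N → ℝ)) (α : Fin (N + 1) → ℝ),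
      (∀ i, (x n, w i) ∈ S) ∧ (∀ i, 0 ≤ α i) ∧ (∑ i, α i) = 1 ∧
      y n = ∑ i, α i • w i := by
    intro n
    have := hmem n
    rw [hD, carath_aux] at this
    obtain ⟨w, α, h1, h2, h3, h4⟩ := this
    exact ⟨w, α, h1, h2, h3, h4⟩
  choose w α hwS hα0 hαsum hrepr using hrep
  -- the sequence (α n, w n) lives in a compact set
  set K : Set ((Fin (N + 1) → ℝ) × (Fin (N + 1) → (Fin N → ℝ))) :=
    (stdSimplex ℝ (Fin (N + 1))) ×ˢ (Set.univ.pi fun _ => E) with hK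
  have hKc : IsCompact K := (isCompact_stdSimplex (ι := Fin (N + 1)) (𝕜 := ℝ)).prod (isCompact_univ_pi fun _ => hE)
  have hmemK : ∀ n, (α n, w n) ∈ K := by
    intro n
    refine ⟨⟨hα0 n, hαsum n⟩, fun i _ => ?_⟩
    exact (hSE (hwS n i)).2
  obtain ⟨⟨aL, wL⟩, hlimK, φ, hφ, hconv⟩ := hKc.tendsto_subseq hmemK
  have hαconv : Tendsto (fun n => α (φ n)) atTop (nhds aL) :=
    (continuous_fst.tendsto _).comp hconv
  have hwconv : ∀ i, Tendsto (fun n => w (φ n) i) atTop (nhds (wL i)) := by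
    intro i
    have := (continuous_snd.tendsto _).comp hconv
    exact ((continuous_apply i).tendsto _).comp this
  -- limit points are in the section at x₀
  have hwLS : ∀ i, (x₀, wL i) ∈ S := by
    intro i
    have hxy : Tendsto (fun n => (x (φ n), w (φ n) i)) atTop (nhds (x₀, wL i)) :=
      ((hx.comp hφ.tendsto_atTop)).prodMk_nhds (hwconv i)
    exact isClosed_closure.mem_of_tendsto hxy (Filter.Eventually.of_forall fun n => hwS (φ n) i)
  -- y₀ is the limit combination
  have hy' : Tendsto (fun n => ∑ i, α (φ n) i • w (φ n) i) atTop
      (nhds (∑ i, aL i • wL i)) := by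
    apply tendsto_finset_sum
    intro i _
    exact (((continuous_apply i).tendsto _).comp hαconv).smul (hwconv i)
  have hy₀ : y₀ = ∑ i, aL i • wL i := by
    apply tendsto_nhds_unique (hy.comp hφ.tendsto_atTop)
    have : (y ∘ φ) = fun n => ∑ i, α (φ n) i • w (φ n) i := by
      funext n; exact hrepr (φ n)
    rw [this]; exact hy'
  rw [hD, carath_aux]
  refine ⟨wL, aL, fun i => hwLS i, fun i => hlimK.1.1 i, hlimK.1.2, hy₀⟩
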